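/- Let X be a compact metric space and f : X → X a weakly mixing continuous map. Then for every nonempty open set U ⊆ X and every positive integer n there exist positive integers m and k such that m + i·k ∈ N(U,U;f) for every i = 1, …, n−1, i.e., f^{m+ik}(U) ∩ U ≠ ∅ for all such i. -/
import Mathlib


open Set Function

/-- A continuous self-map is topologically transitive if every pair of nonempty
open sets is connected by some positive iterate. -/
def TopTransitive {X : Type*} [TopologicalSpace X] (f : X → X) : Prop :=
  ∀ U V : Set X, IsOpen U → IsOpen V → U.Nonempty → V.Nonempty →
    ∃ n : ℕ, 0 < n ∧ (f^[n] '' U ∩ V).Nonempty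

/-- The map `f^{(∗m)} = f × f² × ⋯ × f^m` acting on `X^m` (coordinates indexed by `Fin m`,
where coordinate `i` is moved by `f^[i+1]`). -/
def starMap {X : Type*} (f : X → X) (m : ℕ) : (Fin m → X) → (Fin m → X) :=
  fun x i => f^[(i : ℕ) + 1] (x i)

/-- `f` is weakly mixing if `f × f` is topologically transitive. -/
def WeaklyMixing {X : Type*} [TopologicalSpace X] (f : X → X) : Prop :=
  TopTransitive (fun p : X × X => (f p.1, f p.2))

/-- `f` is multi-transitive if `f × f² × ⋯ × f^m` is topologically transitive
for every `m ≥ 1`. -/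
def MultiTransitive {X : Type*} [TopologicalSpace X] (f : X → X) : Prop :=
  ∀ m : ℕ, 1 ≤ m → TopTransitive (starMap f m)

/-- `f` is Δ-transitive if for each `m ≥ 1` there is a residual set `Y ⊆ X` such that
for every `x ∈ Y` the diagonal tuple `(x, …, x)` has dense orbit under `f × f² × ⋯ × f^m`. -/
def DeltaTransitive {X : Type*} [TopologicalSpace X] (f : X → X) : Prop :=
  ∀ m : ℕ, 1 ≤ m → ∃ Y : Set X, Y ∈ residual X ∧
    ∀ x ∈ Y, Dense (Set.range fun n : ℕ => (starMap f m)^[n] (fun _ : Fin m => x))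

/-- A set `S ⊆ ℕ` is syndetic if there is `L > 0` with `[n, n+L] ∩ S ≠ ∅` for every `n`. -/
def Syndetic (S : Set ℕ) : Prop :=
  ∃ L : ℕ, 0 < L ∧ ∀ n : ℕ, ∃ k ∈ S, n ≤ k ∧ k ≤ n + L

/-- `N(U,V;f) = {n > 0 : f^n(U) ∩ V ≠ ∅}`. -/
def NSet {X : Type*} (f : X → X) (U V : Set X) : Set ℕ :=
  {n | 0 < n ∧ (f^[n] '' U ∩ V).Nonempty}

/-- `f` is syndetically transitive if `N(U,V;f)` is syndetic for all nonempty open `U, V`. -/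
def SyndeticallyTransitive {X : Type*} [TopologicalSpace X] (f : X → X) : Prop :=
  ∀ U V : Set X, IsOpen U → IsOpen V → U.Nonempty → V.Nonempty → Syndetic (NSet f U V)

/-- `f` is strongly transitive if for every nonempty open `U` there is `M > 0` with
`⋃_{j=1}^M f^j(U) = X`. -/
def StronglyTransitive {X : Type*} [TopologicalSpace X] (f : X → X) : Prop :=
  ∀ U : Set X, IsOpen U → U.Nonempty →
    ∃ M : ℕ, 0 < M ∧ (⋃ j ∈ Finset.Icc 1 M, f^[j] '' U) = Set.univ

/-- `f` is minimal if the only nonempty closed `f`-invariant subset is the whole space. -/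
def MinimalMap {X : Type*} [TopologicalSpace X] (f : X → X) : Prop :=
  ∀ K : Set X, IsClosed K → K.Nonempty → f '' K ⊆ K → K = Set.univ


section Aux

variable {X : Type*} [TopologicalSpace X] (f : X → X)

lemma iterate_pair (f : X → X) (n : ℕ) :
    (fun p : X × X => (f p.1, f p.2))^[n] = fun p : X × X => (f^[n] p.1, f^[n] p.2) := by
  induction n with
  | zero => rfl
  | succ n ih => rw [Function.iterate_succ', ih, Function.iterate_succ']; rfl

lemma trans_of_wm (hwm : WeaklyMixing f) : TopTransitive f := by
  intro U V hU hV hUne hVne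
  obtain ⟨n, hn, ⟨p, hp1, hp2⟩⟩ := hwm (U ×ˢ U) (V ×ˢ V) (hU.prod hU) (hV.prod hV)
    (hUne.prod hUne) (hVne.prod hVne)
  obtain ⟨q, hq, hfq⟩ := hp1
  rw [iterate_pair] at hfq
  have hfq' : (f^[n] q.1, f^[n] q.2) = p := hfq
  obtain ⟨h1, h2⟩ := Prod.mk.inj hfq'
  exact ⟨n, hn, ⟨p.1, ⟨q.1, hq.1, h1⟩, hp2.1⟩⟩

lemma key_lemma (hf : Continuous f) (hwm : WeaklyMixing f)
    (A1 B1 A2 B2 : Set X) (hA1 : IsOpen A1) (hB1 : IsOpen B1) (hA2 : IsOpen A2)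
    (hB2 : IsOpen B2) (hA1n : A1.Nonempty) (hB1n : B1.Nonempty) (hA2n : A2.Nonempty)
    (hB2n : B2.Nonempty) :
    ∃ A B : Set X, IsOpen A ∧ IsOpen B ∧ A.Nonempty ∧ B.Nonempty ∧
      NSet f A B ⊆ NSet f A1 B1 ∩ NSet f A2 B2 := by
  obtain ⟨n, hn, ⟨p, hp1, hp2⟩⟩ := hwm (A1 ×ˢ B1) (A2 ×ˢ B2) (hA1.prod hB1) (hA2.prod hB2)
    (hA1n.prod hB1n) (hA2n.prod hB2n)
  obtain ⟨q, hq, hfq⟩ := hp1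
  rw [iterate_pair] at hfq
  have hfq' : (f^[n] q.1, f^[n] q.2) = p := hfq
  obtain ⟨h1, h2⟩ := Prod.mk.inj hfq'
  refine ⟨A1 ∩ f^[n] ⁻¹' A2, B1 ∩ f^[n] ⁻¹' B2,
    hA1.inter (hA2.preimage (hf.iterate n)), hB1.inter (hB2.preimage (hf.iterate n)),
    ⟨q.1, hq.1, by rw [Set.mem_preimage, h1]; exact hp2.1⟩,
    ⟨q.2, hq.2, by rw [Set.mem_preimage, h2]; exact hp2.2⟩, ?_⟩
  rintro m ⟨hm, y, ⟨x, ⟨hxA1, hxA2⟩, hxy⟩, hyB1, hyB2⟩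
  refine ⟨⟨hm, y, ⟨x, hxA1, hxy⟩, hyB1⟩, hm, f^[n] y, ⟨f^[n] x, hxA2, ?_⟩, hyB2⟩
  rw [← hxy, ← Function.iterate_add_apply, ← Function.iterate_add_apply, Nat.add_comm]

lemma inter_lemma (hf : Continuous f) (hwm : WeaklyMixing f) [Nonempty X]
    (r : ℕ) (Us Vs : ℕ → Set X)
    (hU : ∀ i < r, IsOpen (Us i) ∧ (Us i).Nonempty)
    (hV : ∀ i < r, IsOpen (Vs i) ∧ (Vs i).Nonempty) :
    ∃ A B : Set X, IsOpen A ∧ IsOpen B ∧ A.Nonempty ∧ B.Nonempty ∧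
      ∀ i < r, NSet f A B ⊆ NSet f (Us i) (Vs i) := by
  induction r with
  | zero => exact ⟨Set.univ, Set.univ, isOpen_univ, isOpen_univ, Set.univ_nonempty,
      Set.univ_nonempty, fun i hi => absurd hi (Nat.not_lt_zero i)⟩
  | succ r ih =>
    obtain ⟨A, B, hA, hB, hAn, hBn, hsub⟩ :=
      ih (fun i hi => hU i (hi.trans (Nat.lt_succ_self r)))
         (fun i hi => hV i (hi.trans (Nat.lt_succ_self r)))
    obtain ⟨hUr, hUrn⟩ := hU r (Nat.lt_succ_self r)
    obtain ⟨hVr, hVrn⟩ := hV r (Nat.lt_succ_self r)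
    obtain ⟨A', B', hA', hB', hA'n, hB'n, hsub'⟩ :=
      key_lemma f hf hwm A B (Us r) (Vs r) hA hB hUr hVr hAn hBn hUrn hVrn
    refine ⟨A', B', hA', hB', hA'n, hB'n, fun i hi m hm => ?_⟩
    rcases Nat.lt_succ_iff_lt_or_eq.mp hi with h | h
    · exact hsub i h (hsub' hm).1
    · rw [h]; exact (hsub' hm).2

lemma unbounded_NSet (hf : Continuous f) (hwm : WeaklyMixing f)
    (U : Set X) (hU : IsOpen U) (hUn : U.Nonempty) :
    ∀ r : ℕ, ∃ n ∈ NSet f U U, r ≤ n := by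
  have htr := trans_of_wm f hwm
  intro r
  induction r with
  | zero =>
    obtain ⟨n, hn, hne⟩ := htr U U hU hU hUn hUn
    exact ⟨n, ⟨hn, hne⟩, Nat.zero_le n⟩
  | succ r ih =>
    obtain ⟨n, ⟨hn, y0, ⟨x0, hx0U, hx0y0⟩, hy0U⟩, hrn⟩ := ih
    have hU' : IsOpen (U ∩ f^[n] ⁻¹' U) := hU.inter (hU.preimage (hf.iterate n))
    have hU'n : (U ∩ f^[n] ⁻¹' U).Nonempty := ⟨x0, hx0U, by rw [Set.mem_preimage, hx0y0]; exact hy0U⟩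
    obtain ⟨t, ht, y, ⟨z, ⟨hzU, hzP⟩, hzy⟩, hyU, hyP⟩ := htr _ _ hU' hU' hU'n hU'n
    refine ⟨n + t, ⟨by omega, f^[n + t] z, ⟨z, hzU, rfl⟩, ?_⟩, by omega⟩
    rw [Function.iterate_add_apply, hzy]
    exact hyP
end Aux

/-- If `f` is weakly mixing, then for every nonempty open `U` and every
`n ≥ 1` there are positive integers `m, k` such that `f^{m+ik}(U) ∩ U ≠ ∅` for every
`i = 1, …, n-1`. -/
theorem statement17 {X : Type*} [MetricSpace X] [CompactSpace X] (f : X → X)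
    (hf : Continuous f) (hwm : WeaklyMixing f) :
    ∀ U : Set X, IsOpen U → U.Nonempty → ∀ n : ℕ, 1 ≤ n →
      ∃ m k : ℕ, 0 < m ∧ 0 < k ∧
        ∀ i : ℕ, 1 ≤ i → i ≤ n - 1 → (f^[m + i * k] '' U ∩ U).Nonempty := by
  intro U hU hUn n hn
  have hX : Nonempty X := ⟨hUn.some⟩
  set r := n - 1 with hr
  -- get a large element of NSet f U U to ensure preimages are nonempty
  obtain ⟨N, ⟨hNpos, yN, ⟨x, hxU, hxyN⟩, hyNU⟩, hrN⟩ := unbounded_NSet f hf hwm U hU hUn r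
  have hpre : ∀ i < r, (f^[i + 1] ⁻¹' U).Nonempty := by
    intro i hi
    refine ⟨f^[N - (i + 1)] x, ?_⟩
    have : f^[i + 1] (f^[N - (i+1)] x) = f^[N] x := by
      rw [← Function.iterate_add_apply]
      congr 1
      omega
    rw [Set.mem_preimage, this, hxyN]
    exact hyNU
  obtain ⟨A, B, hA, hB, hAn, hBn, hsub⟩ := inter_lemma f hf hwm r (fun _ => U)
    (fun i => f^[i + 1] ⁻¹' U)
    (fun i _ => ⟨hU, hUn⟩)
    (fun i hi => ⟨hU.preimage (hf.iterate (i + 1)), hpre i hi⟩)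
  obtain ⟨t, ht, hne⟩ := trans_of_wm f hwm A B hA hB hAn hBn
  refine ⟨t, 1, ht, Nat.one_pos, fun i hi1 hir => ?_⟩
  have hmem : t ∈ NSet f U (f^[i - 1 + 1] ⁻¹' U) := hsub (i - 1) (by omega) ⟨ht, hne⟩
  obtain ⟨-, w, ⟨y, hyU, hyw⟩, hwP⟩ := hmem
  refine ⟨f^[t + i * 1] y, ⟨y, hyU, rfl⟩, ?_⟩
  have : t + i * 1 = (i - 1 + 1) + t := by omega
  rw [this, Function.iterate_add_apply, hyw]
  exact hwP
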